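/- For positive integers t_1, ..., t_N and L, the inequality ∑_{i=1}^N ⌈t_i/L⌉ − ⌈(∑_{i=1}^N t_i)/L⌉ ≤ N − ⌈N/L⌉ holds. -/
import Mathlib

lemma ceil_nat_div (t L : ℕ) (ht : 0 < t) (hL : 0 < L) :
    ⌈(t : ℚ) / (L : ℚ)⌉ = ((t - 1) / L + 1 : ℕ) := by
  have hL' : (0:ℚ) < (L:ℚ) := by exact_mod_cast hL
  rw [Int.ceil_eq_iff]
  constructor
  · push_cast
    rw [add_sub_cancel_right, lt_div_iff₀ hL']
    have h1 : ((t-1)/L) * L ≤ t - 1 := Nat.div_mul_le_self _ _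
    have : (t-1)/L * L < t := by omega
    exact_mod_cast this
  · push_cast
    rw [div_le_iff₀ hL']
    have : t - 1 < L * ((t-1)/L + 1) := Nat.lt_mul_div_succ _ hL
    have : t ≤ ((t-1)/L + 1) * L := by rw [mul_comm]; omega
    exact_mod_cast this

lemma sum_div_le {α : Type*} (s : Finset α) (f : α → ℕ) (L : ℕ) :
    ∑ i ∈ s, f i / L ≤ (∑ i ∈ s, f i) / L := by
  induction s using Finset.cons_induction with
  | empty => simp
  | cons a s ha ih =>
    rw [Finset.sum_cons, Finset.sum_cons]
    exact le_trans (Nat.add_le_add_left ih _) (Nat.add_div_le_add_div _ _ _)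

/-- For positive integers `t_1, …, t_N` and `L`:
`∑ ⌈t_i/L⌉ − ⌈(∑ t_i)/L⌉ ≤ N − ⌈N/L⌉`. -/
theorem ceil_sum_sub_ceil_le {N L : ℕ} (hN : 0 < N) (hL : 0 < L)
    (t : Fin N → ℕ) (ht : ∀ i, 0 < t i) :
    (∑ i, ⌈(t i : ℚ) / (L : ℚ)⌉) - ⌈(∑ i, (t i : ℚ)) / (L : ℚ)⌉ ≤
      (N : ℤ) - ⌈(N : ℚ) / (L : ℚ)⌉ := by
  set S : ℕ := ∑ i, t i with hS
  have hSpos : 0 < S := Finset.sum_pos (fun i _ => ht i) ⟨⟨0, hN⟩, Finset.mem_univ _⟩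
  have h1 : ∀ i : Fin N, ⌈(t i : ℚ) / (L : ℚ)⌉ = (((t i - 1) / L + 1 : ℕ) : ℤ) :=
    fun i => ceil_nat_div _ _ (ht i) hL
  have h2 : (∑ i, (t i : ℚ)) = (S : ℚ) := by push_cast [hS]; ring
  rw [h2, ceil_nat_div S L hSpos hL, ceil_nat_div N L hN hL]
  simp only [h1]
  push_cast
  rw [Finset.sum_add_distrib]
  simp only [Finset.sum_const, Finset.card_univ, Fintype.card_fin, nsmul_eq_mul, mul_one]
  -- reduces to nat inequality
  have key : (∑ i, (t i - 1) / L) + (N - 1) / L ≤ (S - 1) / L := by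
    have h3 : (∑ i, (t i - 1)) + (N - 1) = S - 1 := by
      have : ∑ i, t i = ∑ i, ((t i - 1) + 1) := by
        apply Finset.sum_congr rfl
        intro i _
        have := ht i; omega
      rw [hS, this, Finset.sum_add_distrib] at *
      simp only [Finset.sum_const, Finset.card_univ, Fintype.card_fin, smul_eq_mul, mul_one]
      omega
    calc (∑ i, (t i - 1) / L) + (N - 1) / L
        ≤ (∑ i, (t i - 1)) / L + (N - 1) / L :=
          Nat.add_le_add_right (sum_div_le _ _ _) _
      _ ≤ ((∑ i, (t i - 1)) + (N - 1)) / L := Nat.add_div_le_add_div _ _ _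
      _ = (S - 1) / L := by rw [h3]
  have key' : ((∑ i, (t i - 1) / L : ℕ) : ℤ) + ((N - 1) / L : ℕ) ≤ ((S - 1) / L : ℕ) := by
    exact_mod_cast key
  push_cast at key' ⊢
  linarith
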